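/- For t > 0 and n ≥ 0, ∫_0^∞ u^n · t·exp(−(u−t)²/(2u))/√(2πu³) du = w_n(t), where w_0(t) = 1 and w_n(t) = Σ_{j=0}^{n−1} ((n+j−1)! t^{n−j})/(j!(n−j−1)! 2^j) for n ≥ 1. That is, the n-th moment of the inverse Gaussian distribution with density ρ_t equals w_n(t). -/

import Mathlib

open Real MeasureTheory

/-- The inverse Gaussian density with both parameters equal to `t`. -/
noncomputable def ρ (t u : ℝ) : ℝ :=
  t * Real.exp (-(u - t) ^ 2 / (2 * u)) / Real.sqrt (2 * π * u ^ 3)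

/-- The basic polynomials of the delta operator `D - (1/2)D²`. -/
noncomputable def w (n : ℕ) (t : ℝ) : ℝ :=
  if n = 0 then 1 else
    ∑ j ∈ Finset.range n,
      ((n + j - 1).factorial : ℝ) * t ^ (n - j) / (j.factorial * (n - j - 1).factorial * 2 ^ j)

open Set Filter Topology

noncomputable def Gcdf (y : ℝ) : ℝ := ∫ s in Set.Iic y, Real.exp (-s^2/2)

lemma gauss_integrable : Integrable (fun s : ℝ => Real.exp (-s^2/2)) := by
  have := integrable_exp_neg_mul_sq (b := (1/2 : ℝ)) (by norm_num)
  convert this using 2 with x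
  ring_nf

lemma gauss_total : ∫ s : ℝ, Real.exp (-s^2/2) = Real.sqrt (2*π) := by
  have := integral_gaussian (1/2 : ℝ)
  have h2 : ∀ s : ℝ, -(1/2 : ℝ) * s^2 = -s^2/2 := by intro s; ring
  simp_rw [h2] at this
  rw [this]
  rw [div_div_eq_mul_div, div_one, mul_comm]

lemma Gcdf_hasDeriv (y : ℝ) : HasDerivAt Gcdf (Real.exp (-y^2/2)) y := by
  have key : ∀ z : ℝ, Gcdf z - Gcdf 0 = ∫ s in (0 : ℝ)..z, Real.exp (-s^2/2) := by
    intro z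
    unfold Gcdf
    rw [intervalIntegral.integral_Iic_sub_Iic gauss_integrable.integrableOn
      gauss_integrable.integrableOn]
  have hd : HasDerivAt (fun z => (∫ s in (0 : ℝ)..z, Real.exp (-s^2/2)) + Gcdf 0)
      (Real.exp (-y^2/2)) y := by
    have := intervalIntegral.integral_hasDerivAt_right
      (gauss_integrable.intervalIntegrable (a := 0) (b := y))
      gauss_integrable.aestronglyMeasurable.stronglyMeasurableAtFilter
      ((Real.continuous_exp.comp (by continuity)).continuousAt (x := y))
    exact this.add_const _
  convert hd using 1
  ext z
  have := key z
  linarith [key z]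

lemma Gcdf_tendsto_top : Tendsto Gcdf atTop (𝓝 (Real.sqrt (2*π))) := by
  have := tendsto_setIntegral_of_monotone (μ := volume)
    (s := fun y : ℝ => Iic y) (f := fun s => Real.exp (-s^2/2))
    (fun i => measurableSet_Iic) (fun a b hab => Iic_subset_Iic.2 hab)
    (by rw [iUnion_Iic]; exact gauss_integrable.integrableOn)
  rw [iUnion_Iic] at this
  unfold Gcdf
  simpa [Gcdf, gauss_total, Measure.restrict_univ] using this

lemma Gcdf_tendsto_bot : Tendsto Gcdf atBot (𝓝 0) := by
  have h := tendsto_setIntegral_of_antitone (μ := volume)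
    (s := fun y : ℝ => Iic (-y)) (f := fun s => Real.exp (-s^2/2))
    (fun i => measurableSet_Iic)
    (fun a b hab => Iic_subset_Iic.2 (by linarith))
    ⟨0, gauss_integrable.integrableOn⟩
  have hempty : (⋂ y : ℝ, Iic (-y)) = ∅ := by
    ext x; simp only [mem_iInter, mem_Iic, mem_empty_iff_false, iff_false, not_forall]
    exact ⟨-(x - 1), by simp⟩
  rw [hempty] at h
  simp only [Measure.restrict_empty, integral_zero_measure] at h
  have : Tendsto (fun y : ℝ => Gcdf (-y)) atTop (𝓝 0) := h
  have h2 := this.comp (tendsto_neg_atBot_atTop : Tendsto (fun y : ℝ => -y) atBot atTop)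
  have : ((fun y : ℝ => Gcdf (-y)) ∘ fun y : ℝ => -y) = Gcdf := by
    ext y; simp [Function.comp]
  rwa [this] at h2

noncomputable def fIG (t u : ℝ) : ℝ := Real.sqrt u - t / Real.sqrt u
noncomputable def hIG (t u : ℝ) : ℝ := -Real.sqrt u - t / Real.sqrt u
noncomputable def EIG (t u : ℝ) : ℝ := Real.exp (-(fIG t u)^2/2)

variable {t : ℝ}

lemma sqrt_tendsto_atTop : Tendsto Real.sqrt atTop atTop := by
  rw [tendsto_atTop_atTop]
  intro b
  exact ⟨b^2, fun a ha => by
    calc b ≤ |b| := le_abs_self b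
    _ = Real.sqrt (b^2) := (Real.sqrt_sq_eq_abs b).symm
    _ ≤ Real.sqrt a := Real.sqrt_le_sqrt ha⟩

lemma fIG_deriv (ht : 0 < t) {u : ℝ} (hu : 0 < u) :
    HasDerivAt (fIG t) (1/(2*Real.sqrt u) + t/(2*u*Real.sqrt u)) u := by
  have hs : Real.sqrt u ≠ 0 := by positivity
  have h1 : HasDerivAt Real.sqrt (1/(2*Real.sqrt u)) u := Real.hasDerivAt_sqrt hu.ne'
  have h2 : HasDerivAt (fun v => t / Real.sqrt v)
      ((0 * Real.sqrt u - t * (1/(2*Real.sqrt u))) / (Real.sqrt u)^2) u :=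
    (hasDerivAt_const u t).div h1 hs
  have := h1.sub h2
  convert this using 1
  · rfl
  · rfl
  · rfl
  rw [Real.sq_sqrt hu.le]
  field_simp
  ring

lemma hIG_deriv (ht : 0 < t) {u : ℝ} (hu : 0 < u) :
    HasDerivAt (hIG t) (-(1/(2*Real.sqrt u)) + t/(2*u*Real.sqrt u)) u := by
  have hs : Real.sqrt u ≠ 0 := by positivity
  have h1 : HasDerivAt Real.sqrt (1/(2*Real.sqrt u)) u := Real.hasDerivAt_sqrt hu.ne'
  have h2 : HasDerivAt (fun v => t / Real.sqrt v)
      ((0 * Real.sqrt u - t * (1/(2*Real.sqrt u))) / (Real.sqrt u)^2) u :=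
    (hasDerivAt_const u t).div h1 hs
  have := (h1.neg).sub h2
  convert this using 1
  · rfl
  · rfl
  · rfl
  rw [Real.sq_sqrt hu.le]
  field_simp
  ring

lemma fIG_tendsto_atTop (ht : 0 < t) : Tendsto (fIG t) atTop atTop := by
  have h1 : Tendsto (fun u : ℝ => t / Real.sqrt u) atTop (𝓝 0) :=
    Tendsto.div_atTop tendsto_const_nhds sqrt_tendsto_atTop
  have h2 : Tendsto (fun u : ℝ => Real.sqrt u + -(t / Real.sqrt u)) atTop atTop :=
    sqrt_tendsto_atTop.atTop_add h1.neg
  exact h2.congr (fun u => by unfold fIG; ring)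

lemma div_sqrt_tendsto (ht : 0 < t) :
    Tendsto (fun u : ℝ => t / Real.sqrt u) (𝓝[>] 0) atTop := by
  have hs : Tendsto (fun u : ℝ => Real.sqrt u) (𝓝[>] 0) (𝓝[>] 0) := by
    apply tendsto_nhdsWithin_of_tendsto_nhds_of_eventually_within
    · have : Tendsto (fun u : ℝ => Real.sqrt u) (𝓝 0) (𝓝 0) := by
        simpa using (Real.continuous_sqrt.tendsto 0)
      exact this.mono_left nhdsWithin_le_nhds
    · filter_upwards [self_mem_nhdsWithin] with u (hu : 0 < u)
      exact Real.sqrt_pos.2 hu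
  have hinv : Tendsto (fun u : ℝ => (Real.sqrt u)⁻¹) (𝓝[>] 0) atTop :=
    hs.inv_tendsto_nhdsGT_zero
  have := hinv.const_mul_atTop ht
  exact this.congr (fun u => by rw [div_eq_mul_inv])

lemma sqrt_tendsto_zero : Tendsto (fun u : ℝ => Real.sqrt u) (𝓝[>] 0) (𝓝 0) :=
  (by simpa using (Real.continuous_sqrt.tendsto 0) :
    Tendsto (fun u : ℝ => Real.sqrt u) (𝓝 0) (𝓝 0)).mono_left nhdsWithin_le_nhds

lemma fIG_tendsto_zero (ht : 0 < t) : Tendsto (fIG t) (𝓝[>] 0) atBot := by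
  have h2 : Tendsto (fun u : ℝ => -(t / Real.sqrt u) + Real.sqrt u) (𝓝[>] 0) atBot :=
    Tendsto.atBot_add (tendsto_neg_atTop_atBot.comp (div_sqrt_tendsto ht)) sqrt_tendsto_zero
  exact h2.congr (fun u => by unfold fIG; ring)

lemma hIG_tendsto_zero (ht : 0 < t) : Tendsto (hIG t) (𝓝[>] 0) atBot := by
  have h2 : Tendsto (fun u : ℝ => -(t / Real.sqrt u) + -Real.sqrt u) (𝓝[>] 0) atBot :=
    Tendsto.atBot_add (tendsto_neg_atTop_atBot.comp (div_sqrt_tendsto ht)) sqrt_tendsto_zero.neg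
  exact h2.congr (fun u => by unfold hIG; ring)

lemma hIG_tendsto_atTop (ht : 0 < t) : Tendsto (hIG t) atTop atBot := by
  have h1 : Tendsto (fun u : ℝ => t / Real.sqrt u) atTop (𝓝 0) :=
    Tendsto.div_atTop tendsto_const_nhds sqrt_tendsto_atTop
  have h2 : Tendsto (fun u : ℝ => Real.sqrt u + t / Real.sqrt u) atTop atTop :=
    sqrt_tendsto_atTop.atTop_add h1
  have := tendsto_neg_atTop_atBot.comp h2
  exact this.congr (fun u => by unfold hIG; simp [Function.comp]; ring)

lemma EIG_eq (hu : 0 < (u:ℝ)) : EIG t u = Real.exp (t - u/2 - t^2/(2*u)) := by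
  unfold EIG fIG
  congr 1
  have h1 : Real.sqrt u ^ 2 = u := Real.sq_sqrt hu.le
  have hs : Real.sqrt u ≠ 0 := by positivity
  field_simp
  rw [h1]; ring

lemma EIG_rho (ht : 0 < t) (hu : 0 < (u:ℝ)) :
    ρ t u = (t / Real.sqrt (2*π)) * (1/(u * Real.sqrt u)) * EIG t u := by
  unfold ρ EIG fIG
  have h1 : Real.sqrt u ^ 2 = u := Real.sq_sqrt hu.le
  have hs : (0:ℝ) < Real.sqrt u := Real.sqrt_pos.2 hu
  have hs' : Real.sqrt u ≠ 0 := hs.ne'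
  have h3 : Real.sqrt (2*π*u^3) = Real.sqrt (2*π) * (u * Real.sqrt u) := by
    rw [show 2*π*u^3 = (2*π) * (u^2*u) by ring,
      Real.sqrt_mul (by positivity : (0:ℝ) ≤ 2*π)]
    congr 1
    rw [Real.sqrt_mul (by positivity : (0:ℝ) ≤ u^2), Real.sqrt_sq hu.le]
  rw [h3]
  have h4 : -(u - t)^2/(2*u) = -(Real.sqrt u - t/Real.sqrt u)^2/2 := by
    have hsq : (Real.sqrt u - t/Real.sqrt u)^2 = (u-t)^2/u := by
      field_simp
      rw [h1]; ring
    rw [hsq]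
    ring
  rw [h4]
  have hpi : (0:ℝ) < Real.sqrt (2*π) := Real.sqrt_pos.2 (by positivity)
  field_simp

lemma hIG_exp (hu : 0 < (u:ℝ)) :
    Real.exp (-(hIG t u)^2/2) = Real.exp (-2*t) * EIG t u := by
  unfold hIG EIG fIG
  rw [← Real.exp_add]
  congr 1
  have h1 : Real.sqrt u ^ 2 = u := Real.sq_sqrt hu.le
  have hs : Real.sqrt u ≠ 0 := by positivity
  field_simp
  nlinarith [h1]

lemma EIG_measurable : Measurable (EIG t) := by
  unfold EIG fIG
  fun_prop

lemma master_integrable (ht : 0 < t) (n : ℕ) :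
    IntegrableOn (fun u : ℝ => u^n / (u * Real.sqrt u) * EIG t u) (Ioi 0) := by
  have hmeas : Measurable (fun u : ℝ => u^n / (u * Real.sqrt u) * EIG t u) := by
    apply Measurable.mul _ EIG_measurable
    fun_prop
  have hsplit : Ioi (0:ℝ) = Ioc 0 1 ∪ Ioi 1 := (Ioc_union_Ioi_eq_Ioi zero_le_one).symm
  rw [hsplit]
  apply IntegrableOn.union
  · -- bounded on (0,1]
    refine Measure.integrableOn_of_bounded (μ := volume) (s := Ioc 0 1)
      (M := 8 * Real.exp t / t^4) measure_Ioc_lt_top.ne hmeas.aestronglyMeasurable ?_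
    filter_upwards [ae_restrict_mem measurableSet_Ioc] with u hu
    obtain ⟨hu0, hu1⟩ := hu
    have hsu : (0:ℝ) < Real.sqrt u := Real.sqrt_pos.2 hu0
    have hsu1 : Real.sqrt u ≤ 1 := by
      rw [show (1:ℝ) = Real.sqrt 1 by simp]
      exact Real.sqrt_le_sqrt hu1
    have hEpos : (0:ℝ) < EIG t u := Real.exp_pos _
    have hexp : Real.exp (-(t^2/(2*u))) ≤ 2 * (2*u/t^2)^2 := by
      have hy : (0:ℝ) < t^2/(2*u) := by positivity
      have hq := Real.quadratic_le_exp_of_nonneg hy.le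
      have h2 : (t^2/(2*u))^2/2 ≤ Real.exp (t^2/(2*u)) := by nlinarith
      calc Real.exp (-(t^2/(2*u))) = (Real.exp (t^2/(2*u)))⁻¹ := Real.exp_neg _
        _ ≤ ((t^2/(2*u))^2/2)⁻¹ := by
            apply inv_anti₀ (by positivity) h2
        _ = 2 * (2*u/t^2)^2 := by field_simp
    have hE2 : EIG t u ≤ Real.exp t * (8*u^2/t^4) := by
      rw [EIG_eq hu0]
      calc Real.exp (t - u/2 - t^2/(2*u))
          ≤ Real.exp (t - t^2/(2*u)) := Real.exp_le_exp.2 (by linarith)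
        _ = Real.exp t * Real.exp (-(t^2/(2*u))) := by rw [← Real.exp_add]; ring_nf
        _ ≤ Real.exp t * (2 * (2*u/t^2)^2) := by
            exact mul_le_mul_of_nonneg_left hexp (Real.exp_nonneg t)
        _ = Real.exp t * (8*u^2/t^4) := by field_simp; ring
    have hun : u^n ≤ 1 := pow_le_one₀ hu0.le hu1
    rw [Real.norm_eq_abs, abs_of_nonneg (by positivity)]
    rw [div_mul_eq_mul_div, div_le_iff₀ (by positivity)]
    have hu2 : u^2 ≤ u * Real.sqrt u := by
      nlinarith [Real.mul_self_sqrt hu0.le,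
        mul_le_mul_of_nonneg_left hsu1 (mul_nonneg hu0.le hsu.le)]
    calc u^n * EIG t u ≤ 1 * EIG t u := mul_le_mul_of_nonneg_right hun hEpos.le
      _ = EIG t u := one_mul _
      _ ≤ Real.exp t * (8*u^2/t^4) := hE2
      _ = 8*Real.exp t*u^2/t^4 := by ring
      _ ≤ 8*Real.exp t*(u*Real.sqrt u)/t^4 := by gcongr
      _ = 8 * Real.exp t / t^4 * (u * Real.sqrt u) := by ring
  · -- decay on (1,∞)
    have hint : IntegrableOn (fun u : ℝ => (Real.exp t * (4^n * n.factorial)) * Real.exp (-(1/4) * u)) (Ioi 1) :=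
      ((exp_neg_integrableOn_Ioi 1 (by norm_num : (0:ℝ) < 1/4))).const_mul _
    apply Integrable.mono hint hmeas.aestronglyMeasurable
    filter_upwards [ae_restrict_mem measurableSet_Ioi] with u hu
    have hu0 : (0:ℝ) < u := lt_trans one_pos hu
    have hsu : (0:ℝ) < Real.sqrt u := Real.sqrt_pos.2 hu0
    have h1u : (1:ℝ) ≤ u * Real.sqrt u := by
      have : (1:ℝ) ≤ Real.sqrt u := by
        rw [show (1:ℝ) = Real.sqrt 1 by simp]
        exact Real.sqrt_le_sqrt (le_of_lt hu)
      nlinarith [le_of_lt (mem_Ioi.1 hu)]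
    have hE : EIG t u ≤ Real.exp t * Real.exp (-(u/2)) := by
      rw [EIG_eq hu0, ← Real.exp_add]
      apply Real.exp_le_exp.2
      have : 0 ≤ t^2/(2*u) := by positivity
      linarith
    have hpow : u^n ≤ 4^n * n.factorial * Real.exp (u/4) := by
      have := Real.pow_div_factorial_le_exp (x := u/4) (by positivity) n
      have h2 : (u/4)^n ≤ n.factorial * Real.exp (u/4) := by
        rw [div_le_iff₀ (by positivity : (0:ℝ) < (n.factorial:ℝ))] at this
        linarith [this]
      calc u^n = 4^n * (u/4)^n := by rw [← mul_pow]; ring_nf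
        _ ≤ 4^n * ((n.factorial:ℝ) * Real.exp (u/4)) := by
            apply mul_le_mul_of_nonneg_left h2 (by positivity)
        _ = 4^n * n.factorial * Real.exp (u/4) := by ring
    have hEpos : (0:ℝ) < EIG t u := Real.exp_pos _
    rw [Real.norm_eq_abs, Real.norm_eq_abs, abs_of_nonneg (by positivity),
      abs_of_nonneg (by positivity)]
    have hexp : Real.exp (u/4) * (Real.exp t * Real.exp (-(u/2)))
        = Real.exp t * Real.exp (-(1/4)*u) := by
      rw [← Real.exp_add, ← Real.exp_add, ← Real.exp_add]
      congr 1; ring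
    calc u^n / (u * Real.sqrt u) * EIG t u
        ≤ u^n * EIG t u := by
          apply mul_le_mul_of_nonneg_right _ hEpos.le
          exact div_le_self (by positivity) h1u
      _ ≤ (4^n * n.factorial * Real.exp (u/4)) * (Real.exp t * Real.exp (-(u/2))) := by
          apply mul_le_mul hpow hE hEpos.le (by positivity)
      _ = 4^n * n.factorial * (Real.exp (u/4) * (Real.exp t * Real.exp (-(u/2)))) := by ring
      _ = 4^n * n.factorial * (Real.exp t * Real.exp (-(1/4)*u)) := by rw [hexp]
      _ = Real.exp t * (4^n * n.factorial) * Real.exp (-(1/4) * u) := by ring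

lemma EIG_hasDeriv (ht : 0 < t) {u : ℝ} (hu : 0 < u) :
    HasDerivAt (EIG t) (-((1:ℝ)/2) * (1 - t^2/u^2) * EIG t u) u := by
  have h1 : Real.sqrt u * Real.sqrt u = u := Real.mul_self_sqrt hu.le
  have hs : (0:ℝ) < Real.sqrt u := Real.sqrt_pos.2 hu
  have hf := fIG_deriv ht hu
  have hsq : HasDerivAt (fun v => -(fIG t v)^2/2)
      (-(2 * fIG t u ^ 1 * (1/(2*Real.sqrt u) + t/(2*u*Real.sqrt u)))/2) u :=
    ((hf.pow 2).neg).div_const 2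
  have hexp := hsq.exp
  have key : -(2 * fIG t u ^ 1 * (1/(2*Real.sqrt u) + t/(2*u*Real.sqrt u)))/2
      = -((1:ℝ)/2) * (1 - t^2/u^2) := by
    unfold fIG
    field_simp
    ring_nf
    have h3 : (Real.sqrt u)^3 = u * Real.sqrt u := by
      rw [pow_succ, pow_two, h1]
    have e1 : u * t^2 * (Real.sqrt u)^3 = u^2 * t^2 * Real.sqrt u := by rw [h3]; ring
    have e2 : u^3 * (Real.sqrt u)^3 = u^4 * Real.sqrt u := by rw [h3]; ring
    rw [Real.sq_sqrt hu.le]; ring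
  unfold EIG
  rw [key] at hexp
  convert hexp using 1
  ring

lemma piecewise_hasDerivAt {B : ℝ → ℝ} {u d : ℝ} (hu : 0 < u) (hB : HasDerivAt B d u) :
    HasDerivAt (fun v => if v ≤ 0 then (0:ℝ) else B v) d u := by
  apply hB.congr_of_eventuallyEq
  filter_upwards [Ioi_mem_nhds hu] with v (hv : 0 < v)
  rw [if_neg (not_le.2 hv)]

lemma piecewise_contWithin {B : ℝ → ℝ} (hB : Tendsto B (𝓝[>] 0) (𝓝 0)) :
    ContinuousWithinAt (fun v => if v ≤ 0 then (0:ℝ) else B v) (Ici 0) 0 := by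
  unfold ContinuousWithinAt
  have h0 : (fun v => if v ≤ 0 then (0:ℝ) else B v) 0 = 0 := if_pos le_rfl
  rw [h0]
  have h : Ici (0:ℝ) = insert 0 (Ioi 0) := by
    ext x; simp [le_iff_lt_or_eq, or_comm, eq_comm]
  rw [h, nhdsWithin_insert, tendsto_sup]
  constructor
  · simpa using tendsto_pure_nhds (fun v => if v ≤ 0 then (0:ℝ) else B v) 0
  · apply Tendsto.congr' _ hB
    filter_upwards [self_mem_nhdsWithin] with v (hv : 0 < v)
    rw [if_neg (not_le.2 hv)]

lemma C0 (ht : 0 < t) :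
    ∫ u in Ioi (0:ℝ), t * (u^0/(u * Real.sqrt u) * EIG t u) = Real.sqrt (2*π) := by
  set B : ℝ → ℝ := fun v => Gcdf (fIG t v) + Real.exp (2*t) * Gcdf (hIG t v) with hBdef
  have hderiv : ∀ u ∈ Ioi (0:ℝ),
      HasDerivAt (fun v => if v ≤ 0 then (0:ℝ) else B v)
        (t * (u^0/(u * Real.sqrt u) * EIG t u)) u := by
    intro u hu
    rw [mem_Ioi] at hu
    have hs : (0:ℝ) < Real.sqrt u := Real.sqrt_pos.2 hu
    have h1 : Real.sqrt u * Real.sqrt u = u := Real.mul_self_sqrt hu.le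
    apply piecewise_hasDerivAt hu
    have d1 : HasDerivAt (fun v => Gcdf (fIG t v))
        (Real.exp (-(fIG t u)^2/2) * (1/(2*Real.sqrt u) + t/(2*u*Real.sqrt u))) u :=
      (Gcdf_hasDeriv (fIG t u)).comp u (fIG_deriv ht hu)
    have d2 : HasDerivAt (fun v => Real.exp (2*t) * Gcdf (hIG t v))
        (Real.exp (2*t) * (Real.exp (-(hIG t u)^2/2) * (-(1/(2*Real.sqrt u)) + t/(2*u*Real.sqrt u)))) u :=
      (((Gcdf_hasDeriv (hIG t u)).comp u (hIG_deriv ht hu))).const_mul _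
    have := d1.add d2
    convert this using 1
    · rfl
    · rfl
    · rfl
    rw [hIG_exp hu]
    show t * (u^0/(u * Real.sqrt u) * EIG t u) =
      EIG t u * (1/(2*Real.sqrt u) + t/(2*u*Real.sqrt u)) +
      Real.exp (2*t) * (Real.exp (-2*t) * EIG t u * (-(1/(2*Real.sqrt u)) + t/(2*u*Real.sqrt u)))
    rw [show Real.exp (2*t) * (Real.exp (-2*t) * EIG t u * (-(1/(2*Real.sqrt u)) + t/(2*u*Real.sqrt u)))
      = (Real.exp (2*t) * Real.exp (-2*t)) * (EIG t u * (-(1/(2*Real.sqrt u)) + t/(2*u*Real.sqrt u))) from by ring,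
      ← Real.exp_add]
    rw [show 2*t + -2*t = 0 by ring]
    simp only [add_neg_cancel, Real.exp_zero, one_mul, pow_zero]
    field_simp
    ring
  have hcont : ContinuousWithinAt (fun v => if v ≤ 0 then (0:ℝ) else B v) (Ici 0) 0 := by
    apply piecewise_contWithin
    have h1 : Tendsto (fun v => Gcdf (fIG t v)) (𝓝[>] 0) (𝓝 0) :=
      Gcdf_tendsto_bot.comp (fIG_tendsto_zero ht)
    have h2 : Tendsto (fun v => Real.exp (2*t) * Gcdf (hIG t v)) (𝓝[>] 0) (𝓝 (Real.exp (2*t) * 0)) :=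
      (Gcdf_tendsto_bot.comp (hIG_tendsto_zero ht)).const_mul _
    have := h1.add h2
    simpa using this
  have htop : Tendsto (fun v => if v ≤ 0 then (0:ℝ) else B v) atTop (𝓝 (Real.sqrt (2*π))) := by
    have h1 : Tendsto (fun v => Gcdf (fIG t v)) atTop (𝓝 (Real.sqrt (2*π))) :=
      Gcdf_tendsto_top.comp (fIG_tendsto_atTop ht)
    have h2 : Tendsto (fun v => Real.exp (2*t) * Gcdf (hIG t v)) atTop (𝓝 (Real.exp (2*t) * 0)) :=
      (Gcdf_tendsto_bot.comp (hIG_tendsto_atTop ht)).const_mul _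
    have h3 := h1.add h2
    apply Tendsto.congr' _ (by simpa using h3)
    filter_upwards [Ioi_mem_atTop (0:ℝ)] with v (hv : 0 < v)
    rw [if_neg (not_le.2 hv)]
  have hint : IntegrableOn (fun u => t * (u^0/(u * Real.sqrt u) * EIG t u)) (Ioi (0:ℝ)) :=
    (master_integrable ht 0).const_mul t
  have := integral_Ioi_of_hasDerivAt_of_tendsto hcont hderiv hint htop
  rw [this, if_pos le_rfl, sub_zero]

lemma C1 (ht : 0 < t) :
    ∫ u in Ioi (0:ℝ), u^1/(u * Real.sqrt u) * EIG t u = Real.sqrt (2*π) := by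
  set B : ℝ → ℝ := fun v => Gcdf (fIG t v) - Real.exp (2*t) * Gcdf (hIG t v) with hBdef
  have hderiv : ∀ u ∈ Ioi (0:ℝ),
      HasDerivAt (fun v => if v ≤ 0 then (0:ℝ) else B v)
        (u^1/(u * Real.sqrt u) * EIG t u) u := by
    intro u hu
    rw [mem_Ioi] at hu
    have hs : (0:ℝ) < Real.sqrt u := Real.sqrt_pos.2 hu
    have h1 : Real.sqrt u * Real.sqrt u = u := Real.mul_self_sqrt hu.le
    apply piecewise_hasDerivAt hu
    have d1 : HasDerivAt (fun v => Gcdf (fIG t v))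
        (Real.exp (-(fIG t u)^2/2) * (1/(2*Real.sqrt u) + t/(2*u*Real.sqrt u))) u :=
      (Gcdf_hasDeriv (fIG t u)).comp u (fIG_deriv ht hu)
    have d2 : HasDerivAt (fun v => Real.exp (2*t) * Gcdf (hIG t v))
        (Real.exp (2*t) * (Real.exp (-(hIG t u)^2/2) * (-(1/(2*Real.sqrt u)) + t/(2*u*Real.sqrt u)))) u :=
      (((Gcdf_hasDeriv (hIG t u)).comp u (hIG_deriv ht hu))).const_mul _
    have := d1.sub d2
    convert this using 1
    · rfl
    · rfl
    · rfl
    rw [hIG_exp hu]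
    show u^1/(u * Real.sqrt u) * EIG t u =
      EIG t u * (1/(2*Real.sqrt u) + t/(2*u*Real.sqrt u)) -
      Real.exp (2*t) * (Real.exp (-2*t) * EIG t u * (-(1/(2*Real.sqrt u)) + t/(2*u*Real.sqrt u)))
    rw [show Real.exp (2*t) * (Real.exp (-2*t) * EIG t u * (-(1/(2*Real.sqrt u)) + t/(2*u*Real.sqrt u)))
      = (Real.exp (2*t) * Real.exp (-2*t)) * (EIG t u * (-(1/(2*Real.sqrt u)) + t/(2*u*Real.sqrt u))) from by ring,
      ← Real.exp_add]
    rw [show 2*t + -2*t = 0 by ring]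
    simp only [add_neg_cancel, Real.exp_zero, one_mul, pow_one]
    field_simp
    ring
  have hcont : ContinuousWithinAt (fun v => if v ≤ 0 then (0:ℝ) else B v) (Ici 0) 0 := by
    apply piecewise_contWithin
    have h1 : Tendsto (fun v => Gcdf (fIG t v)) (𝓝[>] 0) (𝓝 0) :=
      Gcdf_tendsto_bot.comp (fIG_tendsto_zero ht)
    have h2 : Tendsto (fun v => Real.exp (2*t) * Gcdf (hIG t v)) (𝓝[>] 0) (𝓝 (Real.exp (2*t) * 0)) :=
      (Gcdf_tendsto_bot.comp (hIG_tendsto_zero ht)).const_mul _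
    have := h1.sub h2
    simpa using this
  have htop : Tendsto (fun v => if v ≤ 0 then (0:ℝ) else B v) atTop (𝓝 (Real.sqrt (2*π))) := by
    have h1 : Tendsto (fun v => Gcdf (fIG t v)) atTop (𝓝 (Real.sqrt (2*π))) :=
      Gcdf_tendsto_top.comp (fIG_tendsto_atTop ht)
    have h2 : Tendsto (fun v => Real.exp (2*t) * Gcdf (hIG t v)) atTop (𝓝 (Real.exp (2*t) * 0)) :=
      (Gcdf_tendsto_bot.comp (hIG_tendsto_atTop ht)).const_mul _
    have h3 := h1.sub h2
    apply Tendsto.congr' _ (by simpa using h3)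
    filter_upwards [Ioi_mem_atTop (0:ℝ)] with v (hv : 0 < v)
    rw [if_neg (not_le.2 hv)]
  have hint : IntegrableOn (fun u => u^1/(u * Real.sqrt u) * EIG t u) (Ioi (0:ℝ)) :=
    master_integrable ht 1
  have := integral_Ioi_of_hasDerivAt_of_tendsto hcont hderiv hint htop
  rw [this, if_pos le_rfl, sub_zero]

lemma pow_sqrt_EIG_tendsto_top (ht : 0 < t) (n : ℕ) :
    Tendsto (fun v : ℝ => v^n * Real.sqrt v * EIG t v) atTop (𝓝 0) := by
  have hg0 : Tendsto (fun u : ℝ => u/2) atTop atTop :=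
    tendsto_id.atTop_div_const two_pos
  have hg1 : Tendsto (fun u : ℝ => (u/2)^(n+1) * Real.exp (-(u/2))) atTop (𝓝 0) :=
    (tendsto_pow_mul_exp_neg_atTop_nhds_zero (n+1)).comp hg0
  have hg : Tendsto (fun u : ℝ => (2:ℝ)^(n+1) * Real.exp t * ((u/2)^(n+1) * Real.exp (-(u/2))))
      atTop (𝓝 0) := by
    have := hg1.const_mul ((2:ℝ)^(n+1) * Real.exp t)
    simpa using this
  apply tendsto_of_tendsto_of_tendsto_of_le_of_le' tendsto_const_nhds hg
  · filter_upwards [Ioi_mem_atTop (0:ℝ)] with v (hv : 0 < v)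
    have : (0:ℝ) < EIG t v := Real.exp_pos _
    positivity
  · filter_upwards [Ioi_mem_atTop (1:ℝ)] with v (hv : 1 < v)
    have hv0 : (0:ℝ) < v := lt_trans one_pos hv
    have hsv : Real.sqrt v ≤ v := by
      have h2 : v ≤ v^2 := by nlinarith
      calc Real.sqrt v ≤ Real.sqrt (v^2) := Real.sqrt_le_sqrt h2
        _ = v := Real.sqrt_sq hv0.le
    have hE : EIG t v ≤ Real.exp t * Real.exp (-(v/2)) := by
      rw [EIG_eq hv0, ← Real.exp_add]
      apply Real.exp_le_exp.2
      have : (0:ℝ) ≤ t^2/(2*v) := by positivity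
      linarith
    have hEpos : (0:ℝ) ≤ EIG t v := (Real.exp_pos _).le
    calc v^n * Real.sqrt v * EIG t v
        ≤ v^n * v * EIG t v := by
          apply mul_le_mul_of_nonneg_right _ hEpos
          exact mul_le_mul_of_nonneg_left hsv (by positivity)
      _ = v^(n+1) * EIG t v := by rw [pow_succ]
      _ ≤ v^(n+1) * (Real.exp t * Real.exp (-(v/2))) := by
          apply mul_le_mul_of_nonneg_left hE (by positivity)
      _ = (2:ℝ)^(n+1) * Real.exp t * ((v/2)^(n+1) * Real.exp (-(v/2))) := by
          rw [div_pow]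
          field_simp

lemma pow_sqrt_EIG_tendsto_zero (ht : 0 < t) (n : ℕ) :
    Tendsto (fun v : ℝ => v^n * Real.sqrt v * EIG t v) (𝓝[>] 0) (𝓝 0) := by
  have hc : Tendsto (fun v : ℝ => v^n * Real.sqrt v * Real.exp t) (𝓝[>] 0) (𝓝 0) := by
    have : ContinuousAt (fun v : ℝ => v^n * Real.sqrt v * Real.exp t) 0 := by
      apply ContinuousAt.mul _ continuousAt_const
      exact (continuousAt_pow _ _).mul Real.continuous_sqrt.continuousAt
    have h2 := this.tendsto.mono_left (nhdsWithin_le_nhds (s := Ioi (0:ℝ)))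
    simpa using h2
  apply tendsto_of_tendsto_of_tendsto_of_le_of_le' tendsto_const_nhds hc
  · filter_upwards [self_mem_nhdsWithin] with v (hv : 0 < v)
    have : (0:ℝ) < EIG t v := Real.exp_pos _
    positivity
  · filter_upwards [self_mem_nhdsWithin] with v (hv : 0 < v)
    have hE : EIG t v ≤ Real.exp t := by
      rw [EIG_eq hv]
      apply Real.exp_le_exp.2
      have h1 : (0:ℝ) ≤ t^2/(2*v) := by positivity
      linarith
    apply mul_le_mul_of_nonneg_left hE (by positivity)

lemma Crec (ht : 0 < t) (n : ℕ) :
    ∫ u in Ioi (0:ℝ),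
      (((n:ℝ)+1/2) * (u^(n+1)/(u*Real.sqrt u)) - (1/2)*(u^(n+2)/(u*Real.sqrt u))
        + (t^2/2)*(u^n/(u*Real.sqrt u))) * EIG t u = 0 := by
  set B : ℝ → ℝ := fun v => v^n * Real.sqrt v * EIG t v with hBdef
  have hderiv : ∀ u ∈ Ioi (0:ℝ),
      HasDerivAt (fun v => if v ≤ 0 then (0:ℝ) else B v)
        ((((n:ℝ)+1/2) * (u^(n+1)/(u*Real.sqrt u)) - (1/2)*(u^(n+2)/(u*Real.sqrt u))
          + (t^2/2)*(u^n/(u*Real.sqrt u))) * EIG t u) u := by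
    intro u hu
    rw [mem_Ioi] at hu
    have hs : (0:ℝ) < Real.sqrt u := Real.sqrt_pos.2 hu
    have h1 : Real.sqrt u * Real.sqrt u = u := Real.mul_self_sqrt hu.le
    apply piecewise_hasDerivAt hu
    have dg : HasDerivAt (fun v => v^n * Real.sqrt v)
        ((n:ℝ) * u^(n-1) * Real.sqrt u + u^n * (1/(2*Real.sqrt u))) u :=
      (hasDerivAt_pow n u).mul (Real.hasDerivAt_sqrt hu.ne')
    have dE := EIG_hasDeriv ht hu
    have := dg.mul dE
    convert this using 1
    · rfl
    · rfl
    · rfl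
    have hn1 : (n:ℝ) * u^(n-1) * Real.sqrt u = (n:ℝ) * (u^n / Real.sqrt u) := by
      cases n with
      | zero => simp
      | succ k =>
        have : (k+1) - 1 = k := rfl
        rw [this, pow_succ]
        field_simp
        linear_combination h1
    rw [hn1, pow_succ, pow_succ, pow_succ]
    generalize hgen : Real.sqrt u = sq at h1 hs ⊢
    rw [← h1]
    have hsne : sq ≠ 0 := hs.ne'
    field_simp
    ring
  have hcont : ContinuousWithinAt (fun v => if v ≤ 0 then (0:ℝ) else B v) (Ici 0) 0 :=
    piecewise_contWithin (pow_sqrt_EIG_tendsto_zero ht n)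
  have htop : Tendsto (fun v => if v ≤ 0 then (0:ℝ) else B v) atTop (𝓝 0) := by
    apply Tendsto.congr' _ (pow_sqrt_EIG_tendsto_top ht n)
    filter_upwards [Ioi_mem_atTop (0:ℝ)] with v (hv : 0 < v)
    rw [if_neg (not_le.2 hv)]
  have hint : IntegrableOn (fun u =>
      (((n:ℝ)+1/2) * (u^(n+1)/(u*Real.sqrt u)) - (1/2)*(u^(n+2)/(u*Real.sqrt u))
        + (t^2/2)*(u^n/(u*Real.sqrt u))) * EIG t u) (Ioi (0:ℝ)) := by
    have i1 := (master_integrable ht (n+1)).const_mul ((n:ℝ)+1/2)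
    have i2 := (master_integrable ht (n+2)).const_mul ((1:ℝ)/2)
    have i3 := (master_integrable ht n).const_mul (t^2/2)
    have hcomb := (i1.sub i2).add i3
    have heq : (fun u : ℝ => ((n:ℝ)+1/2) * (u^(n+1)/(u*Real.sqrt u) * EIG t u)
        - (1/2) * (u^(n+2)/(u*Real.sqrt u) * EIG t u)
        + (t^2/2) * (u^n/(u*Real.sqrt u) * EIG t u))
        = (fun u : ℝ => (((n:ℝ)+1/2) * (u^(n+1)/(u*Real.sqrt u)) - (1/2)*(u^(n+2)/(u*Real.sqrt u))
          + (t^2/2)*(u^n/(u*Real.sqrt u))) * EIG t u) := by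
      funext u; ring
    rw [← heq]
    exact hcomb
  have := integral_Ioi_of_hasDerivAt_of_tendsto hcont hderiv hint htop
  rw [this, if_pos le_rfl, sub_zero]

lemma moment_core (ht : 0 < t) (n : ℕ) :
    ∫ u in Ioi (0:ℝ), u^n * ρ t u
      = (t/Real.sqrt (2*π)) * ∫ u in Ioi (0:ℝ), u^n/(u*Real.sqrt u) * EIG t u := by
  rw [← integral_const_mul]
  apply setIntegral_congr_fun measurableSet_Ioi
  intro u hu
  rw [mem_Ioi] at hu
  show u ^ n * ρ t u = t / Real.sqrt (2*π) * (u ^ n / (u * Real.sqrt u) * EIG t u)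
  rw [EIG_rho ht hu]
  ring

lemma I0 (ht : 0 < t) :
    ∫ u in Ioi (0:ℝ), u^0/(u*Real.sqrt u) * EIG t u = Real.sqrt (2*π)/t := by
  have h := C0 ht
  rw [integral_const_mul] at h
  field_simp at h ⊢
  linarith

lemma Irec (ht : 0 < t) (n : ℕ) :
    ∫ u in Ioi (0:ℝ), u^(n+2)/(u*Real.sqrt u) * EIG t u
      = (2*(n:ℝ)+1) * (∫ u in Ioi (0:ℝ), u^(n+1)/(u*Real.sqrt u) * EIG t u)
        + t^2 * ∫ u in Ioi (0:ℝ), u^n/(u*Real.sqrt u) * EIG t u := by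
  have h := Crec ht n
  have i1 := (master_integrable ht (n+1)).const_mul ((n:ℝ)+1/2)
  have i2 := (master_integrable ht (n+2)).const_mul ((1:ℝ)/2)
  have i3 := (master_integrable ht n).const_mul (t^2/2)
  have heq : (fun u : ℝ => (((n:ℝ)+1/2) * (u^(n+1)/(u*Real.sqrt u)) - (1/2)*(u^(n+2)/(u*Real.sqrt u))
        + (t^2/2)*(u^n/(u*Real.sqrt u))) * EIG t u)
      = (fun u : ℝ => (((n:ℝ)+1/2) * (u^(n+1)/(u*Real.sqrt u) * EIG t u)
        - (1/2) * (u^(n+2)/(u*Real.sqrt u) * EIG t u))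
        + (t^2/2) * (u^n/(u*Real.sqrt u) * EIG t u)) := by
    funext u; ring
  rw [heq] at h
  have i12 : Integrable (fun u : ℝ => ((n:ℝ)+1/2) * (u^(n+1)/(u*Real.sqrt u) * EIG t u)
      - (1/2) * (u^(n+2)/(u*Real.sqrt u) * EIG t u)) (volume.restrict (Ioi 0)) := i1.sub i2
  rw [integral_add i12 i3, integral_sub i1 i2,
    integral_const_mul, integral_const_mul, integral_const_mul] at h
  linear_combination (-2 : ℝ) * h

lemma Mrec (ht : 0 < t) (n : ℕ) :
    ∫ u in Ioi (0:ℝ), u^(n+2) * ρ t u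
      = (2*(n:ℝ)+1) * (∫ u in Ioi (0:ℝ), u^(n+1) * ρ t u)
        + t^2 * ∫ u in Ioi (0:ℝ), u^n * ρ t u := by
  rw [moment_core ht (n+2), moment_core ht (n+1), moment_core ht n, Irec ht n]
  ring

lemma M0 (ht : 0 < t) : ∫ u in Ioi (0:ℝ), u^0 * ρ t u = 1 := by
  rw [moment_core ht 0, I0 ht]
  have hpi : (0:ℝ) < Real.sqrt (2*π) := Real.sqrt_pos.2 (by positivity)
  field_simp

lemma M1 (ht : 0 < t) : ∫ u in Ioi (0:ℝ), u^1 * ρ t u = t := by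
  rw [moment_core ht 1, C1 ht]
  have hpi : (0:ℝ) < Real.sqrt (2*π) := Real.sqrt_pos.2 (by positivity)
  field_simp

noncomputable def wTerm (m j : ℕ) (t : ℝ) : ℝ :=
  ((m + j - 1).factorial : ℝ) * t ^ (m - j) / (j.factorial * (m - j - 1).factorial * 2 ^ j)

lemma w_eq {n : ℕ} (hn : n ≠ 0) (t : ℝ) : w n t = ∑ j ∈ Finset.range n, wTerm n j t := by
  rw [w, if_neg hn]
  rfl

lemma w0 (t : ℝ) : w 0 t = 1 := by simp [w]

lemma w1 (t : ℝ) : w 1 t = t := by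
  rw [w_eq one_ne_zero, Finset.sum_range_one, wTerm]
  norm_num [Nat.factorial]

lemma w2 (t : ℝ) : w 2 t = t^2 + t := by
  rw [w_eq two_ne_zero, Finset.sum_range_succ, Finset.sum_range_one, wTerm, wTerm]
  norm_num [Nat.factorial]

lemma factorial_cast_succ (m : ℕ) :
    ((m+1).factorial : ℝ) = (m+1) * (m.factorial : ℝ) := by
  rw [Nat.factorial_succ]; push_cast; ring

lemma wT_e0 (t : ℝ) (k : ℕ) : wTerm (k+3) 0 t = t^2 * wTerm (k+1) 0 t := by
  unfold wTerm
  simp only [show k+3+0-1 = k+2 from by omega, show k+3-0 = k+3 from by omega,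
    show k+3-0-1 = k+2 from by omega, show k+1+0-1 = k from by omega,
    show k+1-0 = k+1 from by omega, show k+1-0-1 = k from by omega,
    Nat.factorial_zero, pow_zero]
  have h1 : ((k+2).factorial : ℝ) ≠ 0 := by positivity
  have h2 : ((k).factorial : ℝ) ≠ 0 := by positivity
  rw [show k+3 = (k+1)+2 from by omega, pow_add]
  field_simp

lemma wT_e2 (t : ℝ) (k : ℕ) : wTerm (k+3) (k+1) t = (2*(k:ℝ)+3) * wTerm (k+2) k t := by
  unfold wTerm
  simp only [show k+3+(k+1)-1 = (2*k+1)+1+1 from by omega,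
    show k+3-(k+1) = 2 from by omega, show k+3-(k+1)-1 = 1 from by omega,
    show k+2+k-1 = 2*k+1 from by omega,
    show k+2-k = 2 from by omega, show k+2-k-1 = 1 from by omega]
  rw [factorial_cast_succ ((2*k+1)+1), factorial_cast_succ (2*k+1),
    factorial_cast_succ k, pow_succ]
  have h1 : ((2*k+1).factorial : ℝ) ≠ 0 := by positivity
  have h2 : ((k).factorial : ℝ) ≠ 0 := by positivity
  have h3 : (2:ℝ)^k ≠ 0 := by positivity
  field_simp
  push_cast
  ring

lemma wT_e3 (t : ℝ) (k : ℕ) : wTerm (k+3) (k+2) t = (2*(k:ℝ)+3) * wTerm (k+2) (k+1) t := by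
  unfold wTerm
  simp only [show k+3+(k+2)-1 = (2*k+2)+1+1 from by omega,
    show k+3-(k+2) = 1 from by omega, show k+3-(k+2)-1 = 0 from by omega,
    show k+2+(k+1)-1 = 2*k+2 from by omega,
    show k+2-(k+1) = 1 from by omega, show k+2-(k+1)-1 = 0 from by omega]
  rw [factorial_cast_succ ((2*k+2)+1), factorial_cast_succ (2*k+2),
    factorial_cast_succ (k+1), pow_succ]
  have h1 : ((2*k+2).factorial : ℝ) ≠ 0 := by positivity
  have h2 : ((k+1).factorial : ℝ) ≠ 0 := by positivity
  have h3 : (2:ℝ)^(k+1) ≠ 0 := by positivity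
  field_simp
  push_cast
  ring

lemma wT_e1 (t : ℝ) {j k : ℕ} (h : j < k) :
    wTerm (k+3) (j+1) t = (2*(k:ℝ)+3) * wTerm (k+2) j t + t^2 * wTerm (k+1) (j+1) t := by
  obtain ⟨d, rfl⟩ : ∃ d, k = j + d + 1 := ⟨k - j - 1, by omega⟩
  unfold wTerm
  simp only [show j+d+1+3+(j+1)-1 = (2*j+d+2)+1+1 from by omega,
    show j+d+1+3-(j+1) = d+3 from by omega,
    show j+d+1+3-(j+1)-1 = (d+1)+1 from by omega,
    show j+d+1+2+j-1 = 2*j+d+2 from by omega,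
    show j+d+1+2-j = d+3 from by omega,
    show j+d+1+2-j-1 = (d+1)+1 from by omega,
    show j+d+1+1+(j+1)-1 = 2*j+d+2 from by omega,
    show j+d+1+1-(j+1) = d+1 from by omega,
    show j+d+1+1-(j+1)-1 = d from by omega,
    show d+3-1 = (d+1)+1 from by omega,
    show d+1-1 = d from by omega]
  rw [factorial_cast_succ ((2*j+d+2)+1), factorial_cast_succ (2*j+d+2),
    factorial_cast_succ ((d+1)), factorial_cast_succ d,
    factorial_cast_succ j,
    show d+3 = (d+1)+2 from by omega, pow_add (t) (d+1) 2, pow_succ (2:ℝ) j]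
  have h1 : ((2*j+d+2).factorial : ℝ) ≠ 0 := by positivity
  have h2 : ((d).factorial : ℝ) ≠ 0 := by positivity
  have h3 : ((j).factorial : ℝ) ≠ 0 := by positivity
  have h4 : (2:ℝ)^j ≠ 0 := by positivity
  field_simp
  push_cast
  ring

lemma wrec (t : ℝ) (n : ℕ) :
    w (n+2) t = (2*(n:ℝ)+1) * w (n+1) t + t^2 * w n t := by
  cases n with
  | zero =>
    rw [w2, w1, w0]
    norm_num
    ring
  | succ k =>
    rw [w_eq (by omega) t, w_eq (by omega) t, w_eq (by omega) t]
    push_cast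
    show ∑ j ∈ Finset.range (k+3), wTerm (k+3) j t
      = (2*((k:ℝ)+1)+1) * ∑ j ∈ Finset.range (k+2), wTerm (k+2) j t
        + t^2 * ∑ j ∈ Finset.range (k+1), wTerm (k+1) j t
    have hL : ∑ j ∈ Finset.range (k+3), wTerm (k+3) j t
        = wTerm (k+3) 0 t + (∑ j ∈ Finset.range k, wTerm (k+3) (j+1) t)
          + wTerm (k+3) (k+1) t + wTerm (k+3) (k+2) t := by
      rw [Finset.sum_range_succ, Finset.sum_range_succ, Finset.sum_range_succ']
      ring
    have hM : ∑ j ∈ Finset.range (k+2), wTerm (k+2) j t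
        = (∑ j ∈ Finset.range k, wTerm (k+2) j t) + wTerm (k+2) k t
          + wTerm (k+2) (k+1) t := by
      rw [Finset.sum_range_succ, Finset.sum_range_succ]
    have hR : ∑ j ∈ Finset.range (k+1), wTerm (k+1) j t
        = wTerm (k+1) 0 t + ∑ j ∈ Finset.range k, wTerm (k+1) (j+1) t := by
      rw [Finset.sum_range_succ']
      ring
    have hsum : ∑ j ∈ Finset.range k, wTerm (k+3) (j+1) t
        = (2*(k:ℝ)+3) * ∑ j ∈ Finset.range k, wTerm (k+2) j t
          + t^2 * ∑ j ∈ Finset.range k, wTerm (k+1) (j+1) t := by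
      rw [Finset.mul_sum, Finset.mul_sum, ← Finset.sum_add_distrib]
      apply Finset.sum_congr rfl
      intro j hj
      exact wT_e1 t (Finset.mem_range.1 hj)
    rw [hL, hM, hR, hsum, wT_e0 t k, wT_e2 t k, wT_e3 t k]
    ring

theorem stmt_13 (t : ℝ) (ht : 0 < t) (n : ℕ) :
    ∫ u in Set.Ioi (0 : ℝ), u ^ n * ρ t u = w n t := by
  have key : ∀ m : ℕ, (∫ u in Set.Ioi (0 : ℝ), u ^ m * ρ t u) = w m t ∧
      (∫ u in Set.Ioi (0 : ℝ), u ^ (m+1) * ρ t u) = w (m+1) t := by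
    intro m
    induction m with
    | zero => exact ⟨by rw [M0 ht, w0], by rw [M1 ht, w1]⟩
    | succ k ih =>
      refine ⟨ih.2, ?_⟩
      rw [Mrec ht k, ih.1, ih.2, wrec t k]
  exact (key n).1
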